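/- Let φ : [0,∞) → ℝ be bounded and continuous, and for λ > 0 define J_λ(t) := ∫₀ᵗ λ·e^(−λτ)·φ(τ) dτ + e^(−λt)·φ(t). Then lim_{λ → 0⁺} inf_{t ≥ 0} J_λ(t) = inf_{t ≥ 0} φ(t). (This is the trajectory-wise form of the corollary that the discounted safety value V^λ converges to the undiscounted safety value V as the discount factor λ approaches zero.) -/

import Mathlib

lemma exp_weight_integral (lam t : ℝ) :
    ∫ τ in (0:ℝ)..t, lam * Real.exp (-(lam * τ)) = 1 - Real.exp (-(lam * t)) := by
  have h : ∀ τ ∈ Set.uIcc (0:ℝ) t,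
      HasDerivAt (fun x : ℝ => -Real.exp (-(lam * x))) (lam * Real.exp (-(lam * τ))) τ := by
    intro τ _
    have h1 : HasDerivAt (fun x : ℝ => -(lam * x)) (-lam) τ := by
      have := ((hasDerivAt_id' τ).const_mul lam).neg
      rwa [mul_one] at this
    have h3 := h1.exp.neg
    exact h3.congr_deriv (by ring)
  have hc : IntervalIntegrable (fun τ => lam * Real.exp (-(lam * τ))) MeasureTheory.volume 0 t :=
    (Continuous.intervalIntegrable (by continuity)) 0 t
  rw [intervalIntegral.integral_eq_sub_of_hasDerivAt h hc]
  simp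
  ring

/-- **Convergence of the discounted to the undiscounted safety value as λ → 0⁺.**
For a bounded continuous constraint signal `φ` on `[0,∞)` and the discounted running
cost `J_λ(t) = ∫₀ᵗ λ·e^(−λτ)·φ(τ) dτ + e^(−λt)·φ(t)`, we have
`lim_{λ → 0⁺} inf_{t ≥ 0} J_λ(t) = inf_{t ≥ 0} φ(t)`. -/
theorem discounted_inf_tendsto_undiscounted_inf
    (φ : ℝ → ℝ) (hφb : ∃ M, ∀ t, 0 ≤ t → |φ t| ≤ M)
    (hφc : ContinuousOn φ (Set.Ici 0)) :
    Filter.Tendsto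
      (fun lam : ℝ =>
        ⨅ t : Set.Ici (0:ℝ),
          (∫ τ in (0:ℝ)..(t:ℝ), lam * Real.exp (-(lam * τ)) * φ τ)
            + Real.exp (-(lam * (t:ℝ))) * φ t)
      (nhdsWithin 0 (Set.Ioi 0))
      (nhds (⨅ t : Set.Ici (0:ℝ), φ t)) := by
  obtain ⟨M, hM⟩ := hφb
  have hM0 : 0 ≤ M := le_trans (abs_nonneg _) (hM 0 le_rfl)
  set V : ℝ := ⨅ t : Set.Ici (0:ℝ), φ t with hVdef
  have hbdd : BddBelow (Set.range fun t : Set.Ici (0:ℝ) => φ t) := by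
    refine ⟨-M, ?_⟩
    rintro x ⟨t, rfl⟩
    linarith [(abs_le.mp (hM t t.2)).1]
  have hVle : ∀ t : Set.Ici (0:ℝ), V ≤ φ t := fun t => ciInf_le hbdd t
  -- integrability of the weighted integrand
  have hint : ∀ (lam : ℝ) (t : Set.Ici (0:ℝ)),
      IntervalIntegrable (fun τ => lam * Real.exp (-(lam * τ)) * φ τ)
        MeasureTheory.volume 0 (t : ℝ) := by
    intro lam t
    apply ContinuousOn.intervalIntegrable
    rw [Set.uIcc_of_le t.2]
    exact (((continuous_const.mul (Real.continuous_exp.comp (by continuity))).continuousOn).mul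
      (hφc.mono (Set.Icc_subset_Ici_self)))
  have hintc : ∀ (lam c : ℝ) (t : ℝ),
      IntervalIntegrable (fun τ => lam * Real.exp (-(lam * τ)) * c)
        MeasureTheory.volume 0 t := fun lam c t =>
    (Continuous.intervalIntegrable (by continuity)) 0 t
  have hconst_int : ∀ (lam c t : ℝ),
      ∫ τ in (0:ℝ)..t, lam * Real.exp (-(lam * τ)) * c
        = (1 - Real.exp (-(lam * t))) * c := by
    intro lam c t
    rw [intervalIntegral.integral_mul_const, exp_weight_integral]
  -- lower bound : V ≤ J_λ(t)
  have hJlb : ∀ lam : ℝ, 0 < lam → ∀ t : Set.Ici (0:ℝ),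
      V ≤ (∫ τ in (0:ℝ)..(t:ℝ), lam * Real.exp (-(lam * τ)) * φ τ)
            + Real.exp (-(lam * (t:ℝ))) * φ t := by
    intro lam hlam t
    have hmono : ∫ τ in (0:ℝ)..(t:ℝ), lam * Real.exp (-(lam * τ)) * V
        ≤ ∫ τ in (0:ℝ)..(t:ℝ), lam * Real.exp (-(lam * τ)) * φ τ := by
      apply intervalIntegral.integral_mono_on t.2 (hintc lam V t) (hint lam t)
      intro x hx
      have : V ≤ φ x := hVle ⟨x, hx.1⟩
      have he : 0 < lam * Real.exp (-(lam * x)) := by positivity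
      nlinarith
    rw [hconst_int] at hmono
    have he1 : Real.exp (-(lam * (t:ℝ))) ≤ 1 :=
      Real.exp_le_one_iff.mpr (neg_nonpos.mpr (mul_nonneg hlam.le t.2))
    have he0 : 0 < Real.exp (-(lam * (t:ℝ))) := Real.exp_pos _
    have hVφ : V ≤ φ t := hVle t
    nlinarith
  rw [Metric.tendsto_nhdsWithin_nhds]
  intro ε hε
  obtain ⟨t0, ht0⟩ : ∃ t : Set.Ici (0:ℝ), φ t < V + ε / 2 :=
    exists_lt_of_ciInf_lt (by linarith)
  have ht0nn : (0:ℝ) ≤ t0 := t0.2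
  refine ⟨ε / (4 * (M + 1) * ((t0:ℝ) + 1)), by positivity, ?_⟩
  intro lam hlam hdist
  rw [Set.mem_Ioi] at hlam
  rw [Real.dist_eq, sub_zero, abs_of_pos hlam] at hdist
  -- upper bound at t0
  have hmono2 : ∫ τ in (0:ℝ)..(t0:ℝ), lam * Real.exp (-(lam * τ)) * φ τ
      ≤ ∫ τ in (0:ℝ)..(t0:ℝ), lam * Real.exp (-(lam * τ)) * M := by
    apply intervalIntegral.integral_mono_on t0.2 (hint lam t0) (hintc lam M t0)
    intro x hx
    have : φ x ≤ M := (abs_le.mp (hM x hx.1)).2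
    have he : 0 < lam * Real.exp (-(lam * x)) := by positivity
    nlinarith
  rw [hconst_int] at hmono2
  set e := Real.exp (-(lam * (t0:ℝ))) with hedef
  have he1 : e ≤ 1 := Real.exp_le_one_iff.mpr (neg_nonpos.mpr (mul_nonneg hlam.le ht0nn))
  have he0 : 0 < e := Real.exp_pos _
  have helin : 1 - lam * (t0:ℝ) ≤ e := by
    have := Real.add_one_le_exp (-(lam * (t0:ℝ)))
    linarith
  have hφ0 : |φ t0| ≤ M := hM t0 t0.2
  have habs := abs_le.mp hφ0
  have hJt0 : (∫ τ in (0:ℝ)..(t0:ℝ), lam * Real.exp (-(lam * τ)) * φ τ) + e * φ t0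
      ≤ φ t0 + 2 * M * (lam * (t0:ℝ)) := by
    nlinarith [mul_nonneg (sub_nonneg.mpr he1) (sub_nonneg.mpr habs.2)]
  have hsmall : 2 * M * (lam * (t0:ℝ)) < ε / 2 := by
    have h1 : lam * (t0:ℝ) < ε / (4 * (M + 1) * ((t0:ℝ) + 1)) * ((t0:ℝ) + 1) := by
      have : lam * (t0:ℝ) ≤ lam * ((t0:ℝ) + 1) := by nlinarith
      calc lam * (t0:ℝ) ≤ lam * ((t0:ℝ)+1) := this
        _ < ε / (4 * (M + 1) * ((t0:ℝ) + 1)) * ((t0:ℝ) + 1) := by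
            apply mul_lt_mul_of_pos_right hdist (by linarith)
    have h2 : ε / (4 * (M + 1) * ((t0:ℝ) + 1)) * ((t0:ℝ) + 1) = ε / (4 * (M + 1)) := by
      field_simp
    rw [h2] at h1
    have h3 : 2 * M * (lam * (t0:ℝ)) ≤ 2 * (M+1) * (lam * (t0:ℝ)) := by nlinarith
    calc 2 * M * (lam * (t0:ℝ)) ≤ 2 * (M+1) * (lam * (t0:ℝ)) := h3
      _ < 2 * (M+1) * (ε / (4 * (M+1))) := by
          apply mul_lt_mul_of_pos_left ?_ (by positivity)
          · exact lt_of_le_of_lt (by nlinarith) h1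
      _ = ε / 2 := by field_simp; ring
  have hbddJ : BddBelow (Set.range fun t : Set.Ici (0:ℝ) =>
      (∫ τ in (0:ℝ)..(t:ℝ), lam * Real.exp (-(lam * τ)) * φ τ)
        + Real.exp (-(lam * (t:ℝ))) * φ t) := by
    refine ⟨V, ?_⟩
    rintro x ⟨t, rfl⟩
    exact hJlb lam hlam t
  have hge : V ≤ ⨅ t : Set.Ici (0:ℝ),
      (∫ τ in (0:ℝ)..(t:ℝ), lam * Real.exp (-(lam * τ)) * φ τ)
        + Real.exp (-(lam * (t:ℝ))) * φ t := le_ciInf (hJlb lam hlam)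
  have hle : (⨅ t : Set.Ici (0:ℝ),
      (∫ τ in (0:ℝ)..(t:ℝ), lam * Real.exp (-(lam * τ)) * φ τ)
        + Real.exp (-(lam * (t:ℝ))) * φ t)
      ≤ (∫ τ in (0:ℝ)..(t0:ℝ), lam * Real.exp (-(lam * τ)) * φ τ) + e * φ t0 :=
    ciInf_le hbddJ t0
  rw [Real.dist_eq, abs_lt]
  constructor <;> [linarith; linarith]
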